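/- For all n ≥ 1 and X_1,...,X_n ∈ A, the free cumulant κ_n satisfies κ_n(X_1,...,X_n) = Σ_{π ∈ [1_n]} t_π[X_1,...,X_n], where the sum ranges over all connected non-crossing linked partitions of {1,...,n} and t_π[X_1,...,X_n] = Π_{blocks B=(i_1,...,i_l) of π} t_{l−1}(X_{i_1},...,X_{i_l}) · Π_{k ∈ s(π)} t_0(X_k). -/

import Mathlib

open scoped Classical


/-- Two blocks `B`, `C` cross: there are `i < k < p < q` with `i, p ∈ B` and `k, q ∈ C`. -/
def Crosses {n : ℕ} (B C : Finset (Fin n)) : Prop :=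
  ∃ i k p q : Fin n, i < k ∧ k < p ∧ p < q ∧ i ∈ B ∧ p ∈ B ∧ k ∈ C ∧ q ∈ C

/-- `π` is a non-crossing linked partition of `{1, …, n}` (encoded as `Fin n`):
its (nonempty) blocks cover `Fin n`, are pairwise non-crossing, any two distinct blocks
intersect in at most one element, and if two distinct blocks intersect in `{j}` then both
blocks have at least two elements and `j` is the minimal element of exactly one of them. -/
def IsNCL (n : ℕ) (π : Finset (Finset (Fin n))) : Prop :=
  (∀ B ∈ π, B.Nonempty) ∧
  (∀ x : Fin n, ∃ B ∈ π, x ∈ B) ∧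
  (∀ B ∈ π, ∀ C ∈ π, B ≠ C → ¬ Crosses B C) ∧
  (∀ B ∈ π, ∀ C ∈ π, B ≠ C → (B ∩ C).card ≤ 1 ∧
    ∀ j : Fin n, B ∩ C = {j} →
      2 ≤ B.card ∧ 2 ≤ C.card ∧
        Xor' (B.min = (j : WithBot (Fin n))) (C.min = (j : WithBot (Fin n))))

/-- `π` is a non-crossing partition: a non-crossing linked partition with pairwise
disjoint blocks. -/
def IsNC (n : ℕ) (π : Finset (Finset (Fin n))) : Prop :=
  IsNCL n π ∧ ∀ B ∈ π, ∀ C ∈ π, B ≠ C → Disjoint B C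

/-- `Refines n σ π` (i.e. `σ ⪯ π`): every block of `π` is a union of blocks of `σ`. -/
def Refines (n : ℕ) (σ π : Finset (Finset (Fin n))) : Prop :=
  ∀ B ∈ π, ∃ S : Finset (Finset (Fin n)), S ⊆ σ ∧ B = S.sup id

/-- `a` and `b` lie in a common block of `π`. -/
def Linked {n : ℕ} (π : Finset (Finset (Fin n))) (a b : Fin n) : Prop :=
  ∃ B ∈ π, a ∈ B ∧ b ∈ B

/-- `a` and `b` are connected in `π`: joined by a chain of pairwise intersecting blocks. -/
def Connected {n : ℕ} (π : Finset (Finset (Fin n))) (a b : Fin n) : Prop :=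
  Relation.ReflTransGen (Linked π) a b

/-- The partition `c(π)` of `Fin n` into the connected components of `π`. -/
noncomputable def cPart (n : ℕ) (π : Finset (Finset (Fin n))) : Finset (Finset (Fin n)) :=
  Finset.univ.image fun i => Finset.univ.filter (Connected π i)

/-- Embedding of the unbarred copy: `i ↦ 2 i` in the interleaved order
`1, 1̄, 2, 2̄, …, n, n̄`. -/
def ueEmb (n : ℕ) (i : Fin n) : Fin (2 * n) := ⟨2 * i.1, by have := i.isLt; omega⟩

/-- Embedding of the barred copy: `i ↦ 2 i + 1` in the interleaved order. -/
def beEmb (n : ℕ) (i : Fin n) : Fin (2 * n) := ⟨2 * i.1 + 1, by have := i.isLt; omega⟩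

/-- The union `γ ∪ γ'` inside the interleaved ordered set `1, 1̄, 2, 2̄, …, n, n̄`. -/
def interleave (n : ℕ) (γ γ' : Finset (Finset (Fin n))) : Finset (Finset (Fin (2 * n))) :=
  γ.image (Finset.image (ueEmb n)) ∪ γ'.image (Finset.image (beEmb n))

/-- `γ'` is the Kreweras complement of `γ`: the largest non-crossing partition (in the
refinement order) such that `γ ∪ γ'` is non-crossing in the interleaved order. -/
def IsKr (n : ℕ) (γ γ' : Finset (Finset (Fin n))) : Prop :=
  IsNC n γ' ∧ IsNC (2 * n) (interleave n γ γ') ∧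
  ∀ τ, IsNC n τ → IsNC (2 * n) (interleave n γ τ) → Refines n τ γ'

/-- `B` is an exterior block of `γ`: no other block `D` of `γ` contains elements `l, s`
with `l = min B`, or `l < min B` and `max B < s`. -/
def IsExteriorIn (n : ℕ) (γ : Finset (Finset (Fin n))) (B : Finset (Fin n)) : Prop :=
  B ∈ γ ∧ ∀ D ∈ γ, D ≠ B → ∀ l ∈ D, ∀ s ∈ D,
    ¬((l ∈ B ∧ ∀ b ∈ B, l ≤ b) ∨ (∀ b ∈ B, l < b ∧ b < s))

/-- Halving map `Fin (2n) → Fin n`. -/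
def halfEmb (n : ℕ) (i : Fin (2 * n)) : Fin n := ⟨i.1 / 2, by have := i.isLt; omega⟩

/-- `γ₋`: the restriction of `γ ∈ NC(2n)` to the odd elements `{1, 3, …, 2n − 1}`
(indices `≡ 0 mod 2` in the `0`-based encoding), identified with a partition of `Fin n`. -/
noncomputable def minusPart (n : ℕ) (γ : Finset (Finset (Fin (2 * n)))) :
    Finset (Finset (Fin n)) :=
  (γ.filter fun B => ∀ i ∈ B, i.1 % 2 = 0).image (Finset.image (halfEmb n))

/-- `γ₊`: the restriction of `γ ∈ NC(2n)` to the even elements `{2, 4, …, 2n}`,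
identified with a partition of `Fin n`. -/
noncomputable def plusPart (n : ℕ) (γ : Finset (Finset (Fin (2 * n)))) :
    Finset (Finset (Fin n)) :=
  (γ.filter fun B => ∀ i ∈ B, i.1 % 2 = 1).image (Finset.image (halfEmb n))

/-- `γ ∈ NC_s(2n)`: a non-crossing partition of `{1, …, 2n}` all of whose blocks have
elements of constant parity, with `γ₊ = Kr(γ₋)`. -/
def NCs (n : ℕ) (γ : Finset (Finset (Fin (2 * n)))) : Prop :=
  IsNC (2 * n) γ ∧
  (∀ B ∈ γ, (∀ i ∈ B, i.1 % 2 = 0) ∨ (∀ i ∈ B, i.1 % 2 = 1)) ∧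
  IsKr n (minusPart n γ) (plusPart n γ)

/-- The restriction of `γ` to a subset `S`. -/
noncomputable def restrictTo (n : ℕ) (γ : Finset (Finset (Fin n))) (S : Finset (Fin n)) :
    Finset (Finset (Fin n)) :=
  (γ.image fun B => B ∩ S).filter Finset.Nonempty

/-- A planar rooted tree: a root together with a linearly ordered (left to right) list of
subtrees. -/
inductive PTree where
  | node : List PTree → PTree

mutual
/-- Number of vertices of a planar rooted tree. -/
def PTree.size : PTree → ℕ
  | .node ts => 1 + sizeList ts
def sizeList : List PTree → ℕ
  | [] => 0
  | t :: ts => PTree.size t + sizeList ts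
end

/-- Depth-first indices of the roots of a list of trees, the first root getting index `k`. -/
def childRoots : List PTree → ℕ → List ℕ
  | [], _ => []
  | t :: ts, k => k :: childRoots ts (k + PTree.size t)

mutual
/-- The blocks of the constituent elementary trees (a root together with its offsprings,
provided there is at least one offspring) of a planar tree, with vertices numbered in
depth-first (left-first) order starting at `k`. -/
def PTree.blk : PTree → ℕ → List (List ℕ)
  | .node ts, k =>
      (if ts.isEmpty then [] else [k :: childRoots ts (k + 1)]) ++ blkList ts (k + 1)
def blkList : List PTree → ℕ → List (List ℕ)
  | [], _ => []
  | t :: ts, k => PTree.blk t k ++ blkList ts (k + PTree.size t)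
end

/-- The blocks of the elementary trees constituting a planar tree, in depth-first
numbering starting at `0`; a single vertex is itself an elementary tree. -/
def treeBlocks : PTree → List (List ℕ)
  | .node [] => [[0]]
  | t => t.blk 0

/-- Convert a list of (`0`-based) vertex numbers into a block of `Fin n`. -/
def listToBlock (n : ℕ) (l : List ℕ) : Finset (Fin n) :=
  (l.filterMap fun i => if h : i < n then some (⟨i, h⟩ : Fin n) else none).toFinset

mutual
/-- Evaluation of a planar rooted tree: the product over its vertices of `f k`, where `k`
is the number of offsprings of the vertex (so an elementary tree with `m` vertices
contributes `f (m − 1)`). -/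
def PTree.eval (f : ℕ → ℂ) : PTree → ℂ
  | .node ts => f ts.length * evalList f ts
def evalList (f : ℕ → ℂ) : List PTree → ℂ
  | [] => 1
  | t :: ts => PTree.eval f t * evalList f ts
end

/-- A bicolor planar rooted tree: each subtree carries a color (`true` = color 1,
`false` = color 0). -/
inductive BTree where
  | node : List (Bool × BTree) → BTree

mutual
/-- Number of vertices of a bicolor planar tree. -/
def BTree.size : BTree → ℕ
  | .node ts => 1 + bsizeList ts
def bsizeList : List (Bool × BTree) → ℕ
  | [] => 0
  | (_, t) :: ts => BTree.size t + bsizeList ts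
end

mutual
/-- Validity of a bicolor planar tree: at every vertex, the offsprings of color 1 precede
the offsprings of color 0. -/
def BTree.Valid : BTree → Prop
  | .node ts => List.Chain' (fun a b => b ≤ a) (ts.map Prod.fst) ∧ bvalidList ts
def bvalidList : List (Bool × BTree) → Prop
  | [] => True
  | (_, t) :: ts => BTree.Valid t ∧ bvalidList ts
end

/-- A bicolor tree is elementary when all offsprings of the root are leaves. -/
def BTree.IsElementary : BTree → Prop
  | .node ts => ∀ p ∈ ts, p.2 = BTree.node []
/-- The term `t_π[X_1, …, X_n]`: the product over blocks `B = (i_1 < … < i_l)` of `π` of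
`t_{l−1}(X_{i_1}, …, X_{i_l})`, times the product over `k ∈ s(π)` (the elements that are
not the minimal element of any block) of `t_0(X_k)`. Here `t m` stands for `t_{m−1}`,
taking `m` arguments. -/
noncomputable def tTerm {A : Type*} [Ring A] (t : ∀ m : ℕ, (Fin m → A) → ℂ)
    (n : ℕ) (π : Finset (Finset (Fin n))) (X : Fin n → A) : ℂ :=
  (∏ B ∈ π, t B.card fun j => X (B.orderIsoOfFin rfl j).1) *
  ∏ k ∈ Finset.univ.filter
      (fun k : Fin n => ∀ B ∈ π, B.min ≠ (k : WithBot (Fin n))),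
    t 1 fun _ => X k

/-- The family `t` satisfies the defining recurrence of the `t`-coefficients:
`φ(X_1 ⋯ X_n) = Σ_{π ∈ NCL(n)} t_π[X_1, …, X_n]`. -/
def TRec {A : Type*} [Ring A] [Algebra ℂ A] (φ : A →ₗ[ℂ] ℂ)
    (t : ∀ m : ℕ, (Fin m → A) → ℂ) : Prop :=
  ∀ (n : ℕ) (X : Fin (n + 1) → A),
    φ (List.ofFn X).prod =
      ∑ π ∈ Finset.univ.filter (fun π => IsNCL (n + 1) π), tTerm t (n + 1) π X

/-- The term `κ_γ[X_1, …, X_n]`: the product over blocks `B = (i_1 < … < i_l)` of `γ` of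
`κ_l(X_{i_1}, …, X_{i_l})`. -/
noncomputable def cumTerm {A : Type*} [Ring A] (κ : ∀ m : ℕ, (Fin m → A) → ℂ)
    (n : ℕ) (γ : Finset (Finset (Fin n))) (X : Fin n → A) : ℂ :=
  ∏ B ∈ γ, κ B.card fun j => X (B.orderIsoOfFin rfl j).1

/-- The family `κ` satisfies the moment–cumulant recurrence
`φ(X_1 ⋯ X_n) = Σ_{γ ∈ NC(n)} κ_γ[X_1, …, X_n]` defining the free cumulants. -/
def CumRec {A : Type*} [Ring A] [Algebra ℂ A] (φ : A →ₗ[ℂ] ℂ)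
    (κ : ∀ m : ℕ, (Fin m → A) → ℂ) : Prop :=
  ∀ (n : ℕ) (X : Fin (n + 1) → A),
    φ (List.ofFn X).prod =
      ∑ γ ∈ Finset.univ.filter (fun γ => IsNC (n + 1) γ), cumTerm κ (n + 1) γ X

/-- Free independence of a family of unital subalgebras: alternating products of centered
elements have vanishing expectation. -/
def FreeFamily {A : Type*} [Ring A] [Algebra ℂ A] (φ : A →ₗ[ℂ] ℂ) {I : Type*}
    (S : I → Subalgebra ℂ A) : Prop :=
  ∀ (n : ℕ) (a : Fin (n + 1) → A) (idx : Fin (n + 1) → I),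
    (∀ k, a k ∈ S (idx k)) → (∀ k, φ (a k) = 0) →
    (∀ k : Fin n, idx k.castSucc ≠ idx k.succ) →
    φ (List.ofFn a).prod = 0

/-- Two elements are free if the unital subalgebras they generate are free. -/
def FreePair {A : Type*} [Ring A] [Algebra ℂ A] (φ : A →ₗ[ℂ] ℂ) (X Y : A) : Prop :=
  FreeFamily φ fun b : Bool =>
    if b = true then Algebra.adjoin ℂ {X} else Algebra.adjoin ℂ {Y}


section Aux
open Finset

variable {n : ℕ} {π : Finset (Finset (Fin n))}

lemma linked_symm {a b : Fin n} (h : Linked π a b) : Linked π b a := by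
  obtain ⟨B, hB, ha, hb⟩ := h; exact ⟨B, hB, hb, ha⟩

lemma connected_symm {a b : Fin n} (h : Connected π a b) : Connected π b a :=
  by haveI : Std.Symm (Linked π) := ⟨fun _ _ => linked_symm⟩
     exact Relation.ReflTransGen.symmetric.symm _ _ h

lemma connected_trans {a b c : Fin n} (h : Connected π a b) (h' : Connected π b c) :
    Connected π a c := Relation.ReflTransGen.trans h h'

lemma linked_connected {a b : Fin n} (h : Linked π a b) : Connected π a b :=
  Relation.ReflTransGen.single h

/-- the connectivity class of `i`. -/
noncomputable def cls (π : Finset (Finset (Fin n))) (i : Fin n) : Finset (Fin n) :=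
  Finset.univ.filter (Connected π i)

lemma mem_cls {i j : Fin n} : j ∈ cls π i ↔ Connected π i j := by
  simp [cls]

lemma mem_cls_self (i : Fin n) : i ∈ cls π i := mem_cls.2 .refl

lemma cls_eq_of_connected {i j : Fin n} (h : Connected π i j) : cls π i = cls π j := by
  ext x; simp only [mem_cls]
  exact ⟨fun hx => connected_trans (connected_symm h) hx, fun hx => connected_trans h hx⟩

lemma mem_cPart {C : Finset (Fin n)} : C ∈ cPart n π ↔ ∃ i, C = cls π i := by
  simp [cPart, cls, eq_comm]

lemma cls_mem_cPart (i : Fin n) : cls π i ∈ cPart n π := mem_cPart.2 ⟨i, rfl⟩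

lemma block_subset_cls {C : Finset (Fin n)} (hC : C ∈ π) {c : Fin n} (hc : c ∈ C) :
    C ⊆ cls π c := fun x hx => mem_cls.2 (linked_connected ⟨C, hC, hc, hx⟩)

/-- Straddle lemma: a chain from `a` to `c` with `a < b < c`, avoiding the component
of `b`, must contain a block with elements on both sides of `b`. -/
lemma straddle {a b : Fin n} (hb : ¬ Connected π a b) (h1 : a < b) :
    ∀ {c : Fin n}, Connected π a c → b < c →
      ∃ B ∈ π, ∃ u ∈ B, ∃ v ∈ B, Connected π a u ∧ u < b ∧ b < v := by
  intro c h
  induction h with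
  | refl => intro h2; exact absurd (h1.trans h2) (lt_irrefl a)
  | @tail x c hax hxc ih =>
    intro h2
    rcases lt_trichotomy x b with hxb | rfl | hbx
    · obtain ⟨B, hB, hxB, hcB⟩ := hxc
      exact ⟨B, hB, x, hxB, c, hcB, hax, hxb, h2⟩
    · exact absurd hax hb
    · exact ih hbx

lemma block_interval (hπ : IsNCL n π) {B C : Finset (Fin n)} (hB : B ∈ π) (hC : C ∈ π)
    (hne : B ≠ C) (hdisj : ∀ s ∈ B, s ∉ C) {u v w : Fin n} (hu : u ∈ B) (hv : v ∈ B)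
    (hw : w ∈ C) (h1 : u < w) (h2 : w < v) : ∀ q ∈ C, u < q ∧ q < v := by
  intro q hq
  constructor
  · by_contra hqu
    push_neg at hqu
    have hqu' : q < u := lt_of_le_of_ne hqu (fun h => hdisj u hu (h ▸ hq))
    exact hπ.2.2.1 C hC B hB (Ne.symm hne) ⟨q, u, w, v, hqu', h1, h2, hq, hw, hu, hv⟩
  · by_contra hqv
    push_neg at hqv
    have hqv' : v < q := lt_of_le_of_ne hqv (fun h => hdisj v hv (h ▸ hq))
    exact hπ.2.2.1 B hB C hC hne ⟨u, w, v, q, h1, h2, hqv', hu, hv, hw, hq⟩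

lemma component_interval (hπ : IsNCL n π) {B : Finset (Fin n)} (hB : B ∈ π) {u v b : Fin n}
    (hu : u ∈ B) (hv : v ∈ B) (hub : ¬ Connected π u b) (h1 : u < b) (h2 : b < v) :
    ∀ {w : Fin n}, Connected π b w → u < w ∧ w < v := by
  intro w hw
  induction hw with
  | refl => exact ⟨h1, h2⟩
  | @tail x w hbx hxw ih =>
    obtain ⟨hux, hxv⟩ := ih
    obtain ⟨C, hC, hxC, hwC⟩ := hxw
    have hdisj : ∀ s ∈ C, s ∉ B := by
      intro s hsC hsB
      exact hub (connected_symm (connected_trans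
        (connected_trans hbx (linked_connected ⟨C, hC, hxC, hsC⟩))
        (linked_connected ⟨B, hB, hsB, hu⟩)))
    have hne : B ≠ C := fun h => hdisj x hxC (h ▸ hxC)
    · exact block_interval hπ hB hC hne (fun s hs hs' => hdisj s hs' hs) hu hv hxC hux hxv w hwC

lemma not_connected_of_cls_ne {i j : Fin n} (h : cls π i ≠ cls π j) : ¬ Connected π i j :=
  fun hc => h (cls_eq_of_connected hc)

lemma cPart_isNC (hπ : IsNCL n π) : IsNC n (cPart n π) := by
  have hdis : ∀ B ∈ cPart n π, ∀ C ∈ cPart n π, B ≠ C → Disjoint B C := by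
    intro B hB C hC hne
    obtain ⟨i, rfl⟩ := mem_cPart.1 hB
    obtain ⟨j, rfl⟩ := mem_cPart.1 hC
    rw [Finset.disjoint_left]
    intro z hzi hzj
    exact hne (by rw [cls_eq_of_connected (mem_cls.1 hzi),
      cls_eq_of_connected (mem_cls.1 hzj)])
  have hcross : ∀ B ∈ cPart n π, ∀ C ∈ cPart n π, B ≠ C → ¬ Crosses B C := by
    intro B hB C hC hne hcr
    obtain ⟨a, k, p, q, h1, h2, h3, haB, hpB, hkC, hqC⟩ := hcr
    obtain ⟨i, rfl⟩ := mem_cPart.1 hB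
    obtain ⟨j, rfl⟩ := mem_cPart.1 hC
    have hap : Connected π a p :=
      connected_trans (connected_symm (mem_cls.1 haB)) (mem_cls.1 hpB)
    have hkq : Connected π k q :=
      connected_trans (connected_symm (mem_cls.1 hkC)) (mem_cls.1 hqC)
    have hak : ¬ Connected π a k := by
      intro hc
      exact hne (by rw [cls_eq_of_connected (mem_cls.1 haB),
        cls_eq_of_connected (mem_cls.1 hkC), cls_eq_of_connected hc])
    -- straddle the chain a → p around k
    obtain ⟨B', hB', u, huB', v, hvB', hau, huk, hkv⟩ := straddle hak h1 hap h2
    have huk' : ¬ Connected π u k := fun hc => hak (connected_trans hau hc)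
    -- component of k lies in (u, v)
    have hcomp : ∀ {w : Fin n}, Connected π k w → u < w ∧ w < v :=
      fun hw => component_interval hπ hB' huB' hvB' huk' huk hkv hw
    -- straddle the chain k → q around p
    have hkp : ¬ Connected π k p := fun hc =>
      hak (connected_trans hap (connected_symm hc))
    obtain ⟨C', hC', u', hu'C', v', hv'C', hku', hu'p, hpv'⟩ := straddle hkp h2 hkq h3
    have hu'p' : ¬ Connected π u' p := fun hc => hkp (connected_trans hku' hc)
    have hu'uv : u < u' ∧ u' < v := hcomp hku'
    -- component of p lies in (u', v'); but u is in the component of p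
    have hpu : Connected π p u := connected_trans (connected_symm hap) hau
    have := component_interval hπ hC' hu'C' hv'C' hu'p' hu'p hpv' hpu
    exact absurd this.1 (not_lt.2 hu'uv.1.le)
  refine ⟨⟨?_, ?_, hcross, ?_⟩, hdis⟩
  · intro B hB
    obtain ⟨i, rfl⟩ := mem_cPart.1 hB
    exact ⟨i, mem_cls_self i⟩
  · intro x
    exact ⟨cls π x, cls_mem_cPart x, mem_cls_self x⟩
  · intro B hB C hC hne
    have hd := hdis B hB C hC hne
    constructor
    · rw [Finset.disjoint_iff_inter_eq_empty.1 hd]; simp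
    · intro j hj
      exfalso
      have : j ∈ B ∩ C := hj ▸ Finset.mem_singleton_self j
      exact Finset.disjoint_left.1 hd (Finset.mem_inter.1 this).1 (Finset.mem_inter.1 this).2

end Aux
section Emb
open Finset

variable {n : ℕ} (B : Finset (Fin n))

/-- The increasing enumeration of `B`. -/
noncomputable def emb (j : Fin B.card) : Fin n := B.orderEmbOfFin rfl j

lemma emb_mem (j : Fin B.card) : emb B j ∈ B := Finset.orderEmbOfFin_mem B rfl j

lemma emb_strictMono : StrictMono (emb B) := (B.orderEmbOfFin rfl).strictMono

lemma emb_inj : Function.Injective (emb B) := (emb_strictMono B).injective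

lemma emb_lt {a b : Fin B.card} : emb B a < emb B b ↔ a < b :=
  (emb_strictMono B).lt_iff_lt

lemma emb_surj {x : Fin n} (hx : x ∈ B) : ∃ j, emb B j = x := by
  have := Finset.range_orderEmbOfFin B rfl
  have : x ∈ Set.range (B.orderEmbOfFin rfl) := by rw [this]; exact hx
  exact this

/-- Push a block of `Fin B.card` forward into `Fin n`. -/
noncomputable def blowBlock (s : Finset (Fin B.card)) : Finset (Fin n) := s.image (emb B)

/-- Push a partition of `Fin B.card` forward into `Fin n`. -/
noncomputable def blow (σ : Finset (Finset (Fin B.card))) : Finset (Finset (Fin n)) :=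
  σ.image (blowBlock B)

/-- Pull a block of `Fin n` contained in `B` back to `Fin B.card`. -/
noncomputable def shrinkBlock (C : Finset (Fin n)) : Finset (Fin B.card) :=
  Finset.univ.filter (fun j => emb B j ∈ C)

/-- Restrict a partition of `Fin n` to `B` and pull it back to `Fin B.card`. -/
noncomputable def shrink (π : Finset (Finset (Fin n))) : Finset (Finset (Fin B.card)) :=
  (π.filter (· ⊆ B)).image (shrinkBlock B)

lemma mem_blowBlock {s : Finset (Fin B.card)} {x : Fin n} :
    x ∈ blowBlock B s ↔ ∃ j ∈ s, emb B j = x := Finset.mem_image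

lemma emb_mem_blowBlock {s : Finset (Fin B.card)} {j : Fin B.card} :
    emb B j ∈ blowBlock B s ↔ j ∈ s := by
  rw [mem_blowBlock]
  exact ⟨fun ⟨j', hj', he⟩ => emb_inj B he ▸ hj', fun h => ⟨j, h, rfl⟩⟩

lemma blowBlock_subset (s : Finset (Fin B.card)) : blowBlock B s ⊆ B := by
  intro x hx; obtain ⟨j, _, rfl⟩ := (mem_blowBlock B).1 hx; exact emb_mem B j

lemma blowBlock_card (s : Finset (Fin B.card)) : (blowBlock B s).card = s.card :=
  Finset.card_image_of_injective s (emb_inj B)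

lemma blowBlock_inj : Function.Injective (blowBlock B) :=
  Finset.image_injective (emb_inj B)

lemma blowBlock_inter (s s' : Finset (Fin B.card)) :
    blowBlock B (s ∩ s') = blowBlock B s ∩ blowBlock B s' :=
  Finset.image_inter s s' (emb_inj B)

lemma blowBlock_nonempty {s : Finset (Fin B.card)} (hs : s.Nonempty) :
    (blowBlock B s).Nonempty := hs.image _

lemma blowBlock_singleton (j : Fin B.card) : blowBlock B {j} = {emb B j} := by
  simp [blowBlock]

lemma crosses_blowBlock {s s' : Finset (Fin B.card)} :
    Crosses (blowBlock B s) (blowBlock B s') ↔ Crosses s s' := by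
  constructor
  · rintro ⟨i, k, p, q, h1, h2, h3, hi, hp, hk, hq⟩
    obtain ⟨i', hi', rfl⟩ := (mem_blowBlock B).1 hi
    obtain ⟨p', hp', rfl⟩ := (mem_blowBlock B).1 hp
    obtain ⟨k', hk', rfl⟩ := (mem_blowBlock B).1 hk
    obtain ⟨q', hq', rfl⟩ := (mem_blowBlock B).1 hq
    exact ⟨i', k', p', q', (emb_lt B).1 h1, (emb_lt B).1 h2, (emb_lt B).1 h3,
      hi', hp', hk', hq'⟩
  · rintro ⟨i, k, p, q, h1, h2, h3, hi, hp, hk, hq⟩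
    exact ⟨emb B i, emb B k, emb B p, emb B q, (emb_lt B).2 h1, (emb_lt B).2 h2,
      (emb_lt B).2 h3, (emb_mem_blowBlock B).2 hi, (emb_mem_blowBlock B).2 hp,
      (emb_mem_blowBlock B).2 hk, (emb_mem_blowBlock B).2 hq⟩

lemma crosses_mono {B₁ C₁ B₂ C₂ : Finset (Fin n)} (h : Crosses B₁ C₁)
    (h1 : B₁ ⊆ B₂) (h2 : C₁ ⊆ C₂) : Crosses B₂ C₂ := by
  obtain ⟨i, k, p, q, ha, hb, hc, hi, hp, hk, hq⟩ := h
  exact ⟨i, k, p, q, ha, hb, hc, h1 hi, h1 hp, h2 hk, h2 hq⟩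

lemma blowBlock_min_map (s : Finset (Fin B.card)) :
    (blowBlock B s).min = WithTop.map (emb B) s.min := by
  rcases s.eq_empty_or_nonempty with rfl | hs
  · simp [blowBlock]
  · have h1 : (blowBlock B s).Nonempty := blowBlock_nonempty B hs
    rw [← Finset.coe_min' hs, ← Finset.coe_min' h1, WithTop.map_coe, WithTop.coe_inj]
    refine le_antisymm (Finset.min'_le _ _ ((emb_mem_blowBlock B).2 (s.min'_mem hs))) ?_
    obtain ⟨j, hj, he⟩ := (mem_blowBlock B).1 ((blowBlock B s).min'_mem h1)
    rw [← he]
    exact (emb_strictMono B).monotone (s.min'_le j hj)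

lemma blowBlock_min_eq {s : Finset (Fin B.card)} {j : Fin B.card} :
    (blowBlock B s).min = (emb B j : WithBot (Fin n)) ↔ s.min = (j : WithBot (Fin B.card)) := by
  rw [blowBlock_min_map]
  cases hm : s.min with
  | top =>
    exact ⟨fun h => absurd h.symm (WithTop.coe_ne_top),
      fun h => absurd h.symm (WithTop.coe_ne_top)⟩
  | coe a =>
    rw [WithTop.map_coe]
    exact ⟨fun h => congrArg _ (emb_inj B (WithTop.coe_inj.1 h)),
      fun h => congrArg _ (congrArg (emb B) (WithTop.coe_inj.1 h))⟩

lemma blowBlock_shrinkBlock {C : Finset (Fin n)} (hC : C ⊆ B) :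
    blowBlock B (shrinkBlock B C) = C := by
  ext x
  simp only [mem_blowBlock, shrinkBlock, Finset.mem_filter, Finset.mem_univ, true_and]
  constructor
  · rintro ⟨j, hj, rfl⟩; exact hj
  · intro hx
    obtain ⟨j, rfl⟩ := emb_surj B (hC hx)
    exact ⟨j, hx, rfl⟩

lemma shrinkBlock_blowBlock (s : Finset (Fin B.card)) :
    shrinkBlock B (blowBlock B s) = s := by
  ext j
  simp [shrinkBlock, emb_mem_blowBlock]

lemma orderEmb_blowBlock (s : Finset (Fin B.card)) (j : Fin (blowBlock B s).card) :
    (blowBlock B s).orderEmbOfFin rfl j =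
      emb B (s.orderEmbOfFin rfl (Fin.cast (blowBlock_card B s) j)) := by
  have hmono : StrictMono (fun j : Fin (blowBlock B s).card =>
      emb B (s.orderEmbOfFin rfl (Fin.cast (blowBlock_card B s) j))) := by
    intro a b hab
    exact (emb_strictMono B) ((s.orderEmbOfFin rfl).strictMono (by simpa using hab))
  have hfs : ∀ x : Fin (blowBlock B s).card,
      emb B (s.orderEmbOfFin rfl (Fin.cast (blowBlock_card B s) x)) ∈ blowBlock B s :=
    fun x => (emb_mem_blowBlock B).2 (Finset.orderEmbOfFin_mem s rfl _)
  exact (congrFun (Finset.orderEmbOfFin_unique rfl hfs hmono) j).symm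

lemma depCongr {A : Type*} (G : ∀ m : ℕ, (Fin m → A) → ℂ) {m m' : ℕ} (h : m = m')
    {f : Fin m → A} {f' : Fin m' → A} (hf : ∀ j, f j = f' (Fin.cast h j)) :
    G m f = G m' f' := by
  subst h
  congr 1
  funext j
  simpa using hf j

end Emb
section Glue
open Finset

variable {n : ℕ}

/-- Admissible local partitions on a block: connected NCL partitions of `Fin B.card`. -/
noncomputable def TSet (B : Finset (Fin n)) : Finset (Finset (Finset (Fin B.card))) :=
  Finset.univ.filter (fun σ => IsNCL B.card σ ∧ cPart B.card σ = {Finset.univ})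

/-- Glue a family of local partitions along the blocks of `γ`. -/
noncomputable def glue (γ : Finset (Finset (Fin n)))
    (p : ∀ B ∈ γ, Finset (Finset (Fin B.card))) : Finset (Finset (Fin n)) :=
  γ.attach.biUnion (fun B => blow B.1 (p B.1 B.2))

lemma mem_TSet {B : Finset (Fin n)} {σ : Finset (Finset (Fin B.card))} :
    σ ∈ TSet B ↔ IsNCL B.card σ ∧ cPart B.card σ = {Finset.univ} := by
  simp [TSet]

lemma cPart_eq_univ_iff {m : ℕ} (hm : 0 < m) {σ : Finset (Finset (Fin m))} :
    cPart m σ = {Finset.univ} ↔ ∀ i j : Fin m, Connected σ i j := by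
  constructor
  · intro h i j
    have h1 : cls σ i ∈ cPart m σ := cls_mem_cPart i
    rw [h, Finset.mem_singleton] at h1
    exact mem_cls.1 (h1.symm ▸ Finset.mem_univ j)
  · intro h
    have hcls : (fun i => Finset.univ.filter (Connected σ i)) =
        fun _ : Fin m => (Finset.univ : Finset (Fin m)) :=
      funext fun i => Finset.eq_univ_of_forall (fun j => (Finset.mem_filter.2 ⟨Finset.mem_univ j, h i j⟩))
    rw [cPart, hcls]
    exact Finset.image_const ⟨⟨0, hm⟩, Finset.mem_univ _⟩ _

lemma mem_glue {γ : Finset (Finset (Fin n))} {p : ∀ B ∈ γ, Finset (Finset (Fin B.card))}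
    {C : Finset (Fin n)} :
    C ∈ glue γ p ↔ ∃ B, ∃ hB : B ∈ γ, ∃ s ∈ p B hB, C = blowBlock B s := by
  simp only [glue, Finset.mem_biUnion, Finset.mem_attach, true_and, Subtype.exists, blow,
    Finset.mem_image]
  constructor
  · rintro ⟨B, hB, s, hs, rfl⟩; exact ⟨B, hB, s, hs, rfl⟩
  · rintro ⟨B, hB, s, hs, rfl⟩; exact ⟨B, hB, s, hs, rfl⟩

variable {γ : Finset (Finset (Fin n))} {p : ∀ B ∈ γ, Finset (Finset (Fin B.card))}

lemma blowBlock_mem_glue {B : Finset (Fin n)} (hB : B ∈ γ) {s : Finset (Fin B.card)}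
    (hs : s ∈ p B hB) : blowBlock B s ∈ glue γ p :=
  mem_glue.2 ⟨B, hB, s, hs, rfl⟩

section props
variable (hγ : IsNC n γ) (hp : ∀ (B) (hB : B ∈ γ), p B hB ∈ TSet B)
include hγ hp

lemma glue_isNCL : IsNCL n (glue γ p) := by
  refine ⟨?_, ?_, ?_, ?_⟩
  · intro C hC
    obtain ⟨B, hB, s, hs, rfl⟩ := mem_glue.1 hC
    exact blowBlock_nonempty B ((mem_TSet.1 (hp B hB)).1.1 s hs)
  · intro x
    obtain ⟨B, hB, hxB⟩ := hγ.1.2.1 x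
    obtain ⟨j, rfl⟩ := emb_surj B hxB
    obtain ⟨s, hs, hjs⟩ := (mem_TSet.1 (hp B hB)).1.2.1 j
    exact ⟨blowBlock B s, blowBlock_mem_glue hB hs, (emb_mem_blowBlock B).2 hjs⟩
  · intro C₁ hC₁ C₂ hC₂ hne hcr
    obtain ⟨B₁, hB₁, s₁, hs₁, rfl⟩ := mem_glue.1 hC₁
    obtain ⟨B₂, hB₂, s₂, hs₂, rfl⟩ := mem_glue.1 hC₂
    by_cases hBeq : B₁ = B₂
    · subst hBeq
      have hsne : s₁ ≠ s₂ := fun h => hne (h ▸ rfl)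
      have hps : p B₁ hB₁ = p B₁ hB₂ := rfl
      exact (mem_TSet.1 (hp B₁ hB₁)).1.2.2.1 s₁ hs₁ s₂ (hps ▸ hs₂) hsne
        ((crosses_blowBlock B₁).1 hcr)
    · exact hγ.1.2.2.1 B₁ hB₁ B₂ hB₂ hBeq
        (crosses_mono hcr (blowBlock_subset B₁ s₁) (blowBlock_subset B₂ s₂))
  · intro C₁ hC₁ C₂ hC₂ hne
    obtain ⟨B₁, hB₁, s₁, hs₁, rfl⟩ := mem_glue.1 hC₁
    obtain ⟨B₂, hB₂, s₂, hs₂, rfl⟩ := mem_glue.1 hC₂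
    by_cases hBeq : B₁ = B₂
    · subst hBeq
      have hsne : s₁ ≠ s₂ := fun h => hne (h ▸ rfl)
      have hps : p B₁ hB₁ = p B₁ hB₂ := rfl
      have hloc := (mem_TSet.1 (hp B₁ hB₁)).1.2.2.2 s₁ hs₁ s₂ (hps ▸ hs₂) hsne
      constructor
      · rw [← blowBlock_inter, blowBlock_card]; exact hloc.1
      · intro j hj
        have hjmem : j ∈ blowBlock B₁ (s₁ ∩ s₂) := by
          rw [blowBlock_inter, hj]; exact Finset.mem_singleton_self j
        obtain ⟨j', hj', rfl⟩ := (mem_blowBlock B₁).1 hjmem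
        have hint : s₁ ∩ s₂ = {j'} := by
          apply blowBlock_inj B₁
          rw [blowBlock_inter, hj, blowBlock_singleton]
        obtain ⟨h2, h3, h4⟩ := hloc.2 j' hint
        refine ⟨by rw [blowBlock_card]; exact h2, by rw [blowBlock_card]; exact h3, ?_⟩
        rw [Xor'] at h4 ⊢
        rw [blowBlock_min_eq, blowBlock_min_eq]
        exact h4
    · have hd : Disjoint (blowBlock B₁ s₁) (blowBlock B₂ s₂) :=
        Finset.disjoint_of_subset_left (blowBlock_subset B₁ s₁)
          (Finset.disjoint_of_subset_right (blowBlock_subset B₂ s₂)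
            (hγ.2 B₁ hB₁ B₂ hB₂ hBeq))
      constructor
      · rw [Finset.disjoint_iff_inter_eq_empty.1 hd]; simp
      · intro j hj
        exact absurd (hj ▸ Finset.mem_singleton_self j)
          (by rw [Finset.disjoint_iff_inter_eq_empty.1 hd]; simp)

lemma cls_glue {B : Finset (Fin n)} (hB : B ∈ γ) {b : Fin n} (hb : b ∈ B) :
    cls (glue γ p) b = B := by
  apply Finset.Subset.antisymm
  · intro w hw
    have hw' : Connected (glue γ p) b w := mem_cls.1 hw
    clear hw
    induction hw' with
    | refl => exact hb
    | @tail x w hbx hxw ih =>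
      obtain ⟨C, hC, hxC, hwC⟩ := hxw
      obtain ⟨B', hB', s, hs, rfl⟩ := mem_glue.1 hC
      have hB'B : B' = B := by
        by_contra hne
        exact Finset.disjoint_left.1 (hγ.2 B' hB' B hB hne) (blowBlock_subset B' s hxC) ih
      exact hB'B ▸ blowBlock_subset B' s hwC
  · intro b' hb'
    obtain ⟨j, rfl⟩ := emb_surj B hb
    obtain ⟨j', rfl⟩ := emb_surj B hb'
    have hcard : 0 < B.card := Finset.card_pos.2 (hγ.1.1 B hB)
    have hconn : Connected (p B hB) j j' :=
      (cPart_eq_univ_iff hcard).1 (mem_TSet.1 (hp B hB)).2 j j'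
    refine mem_cls.2 (Relation.ReflTransGen.lift (emb B) ?_ _ _ hconn)
    rintro a b ⟨s, hs, ha, hb2⟩
    exact ⟨blowBlock B s, blowBlock_mem_glue hB hs,
      (emb_mem_blowBlock B).2 ha, (emb_mem_blowBlock B).2 hb2⟩

lemma cPart_glue : cPart n (glue γ p) = γ := by
  ext E
  rw [show E ∈ cPart n (glue γ p) ↔ ∃ i, E = cls (glue γ p) i from mem_cPart]
  constructor
  · rintro ⟨i, rfl⟩
    obtain ⟨B, hB, hiB⟩ := hγ.1.2.1 i
    rw [cls_glue hγ hp hB hiB]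
    exact hB
  · intro hE
    obtain ⟨b, hb⟩ := hγ.1.1 E hE
    exact ⟨b, (cls_glue hγ hp hE hb).symm⟩

lemma glue_filter {B : Finset (Fin n)} (hB : B ∈ γ) :
    (glue γ p).filter (· ⊆ B) = blow B (p B hB) := by
  ext C
  rw [Finset.mem_filter]
  constructor
  · rintro ⟨hC, hCB⟩
    obtain ⟨B', hB', s, hs, rfl⟩ := mem_glue.1 hC
    obtain ⟨x, hx⟩ := blowBlock_nonempty B' ((mem_TSet.1 (hp B' hB')).1.1 s hs)
    have hB'B : B' = B := by
      by_contra hne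
      exact Finset.disjoint_left.1 (hγ.2 B' hB' B hB hne)
        (blowBlock_subset B' s hx) (hCB hx)
    subst hB'B
    exact Finset.mem_image_of_mem _ hs
  · intro hC
    obtain ⟨s, hs, rfl⟩ := Finset.mem_image.1 hC
    exact ⟨blowBlock_mem_glue hB hs, blowBlock_subset B s⟩

end props
end Glue
section Mult
open Finset

variable {n : ℕ} {γ : Finset (Finset (Fin n))} {p : ∀ B ∈ γ, Finset (Finset (Fin B.card))}
variable {A : Type*} [Ring A]

lemma blow_pairwiseDisjoint (hγ : IsNC n γ) (hp : ∀ (B) (hB : B ∈ γ), p B hB ∈ TSet B) :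
    (↑γ.attach : Set {x // x ∈ γ}).PairwiseDisjoint
      (fun b : {x // x ∈ γ} => blow b.1 (p b.1 b.2)) := by
  intro b₁ _ b₂ _ hne
  have hne' : b₁.1 ≠ b₂.1 := fun h => hne (Subtype.ext h)
  rw [Function.onFun, Finset.disjoint_left]
  intro C hC1 hC2
  obtain ⟨s₁, hs₁, rfl⟩ := Finset.mem_image.1 hC1
  obtain ⟨s₂, hs₂, hC⟩ := Finset.mem_image.1 hC2
  obtain ⟨x, hx⟩ := blowBlock_nonempty b₁.1 ((mem_TSet.1 (hp b₁.1 b₁.2)).1.1 s₁ hs₁)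
  have hx₂ : x ∈ blowBlock b₂.1 s₂ := hC.symm ▸ hx
  exact Finset.disjoint_left.1 (hγ.2 b₁.1 b₁.2 b₂.1 b₂.2 hne')
    (blowBlock_subset b₁.1 s₁ hx) (blowBlock_subset b₂.1 s₂ hx₂)

lemma tTerm_glue (hγ : IsNC n γ) (hp : ∀ (B) (hB : B ∈ γ), p B hB ∈ TSet B)
    (t : ∀ m : ℕ, (Fin m → A) → ℂ) (X : Fin n → A) :
    tTerm t n (glue γ p) X
      = ∏ b ∈ γ.attach, tTerm t b.1.card (p b.1 b.2) (fun j => X (emb b.1 j)) := by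
  unfold tTerm
  rw [Finset.prod_mul_distrib]
  congr 1
  · -- first factors
    rw [glue, Finset.prod_biUnion (blow_pairwiseDisjoint hγ hp)]
    refine Finset.prod_congr rfl ?_
    intro b _
    rw [blow, Finset.prod_image (fun s₁ _ s₂ _ h => blowBlock_inj b.1 h)]
    refine Finset.prod_congr rfl ?_
    intro s hs
    refine depCongr t (blowBlock_card b.1 s) ?_
    intro j
    show X ((blowBlock b.1 s).orderEmbOfFin rfl j) = _
    rw [orderEmb_blowBlock]
    rfl
  · -- second factors
    have hfil : Finset.univ.filter
          (fun k : Fin n => ∀ C ∈ glue γ p, C.min ≠ (k : WithBot (Fin n)))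
        = γ.attach.biUnion (fun b => (Finset.univ.filter
            (fun j : Fin b.1.card => ∀ s ∈ p b.1 b.2,
              s.min ≠ (j : WithBot (Fin b.1.card)))).image (emb b.1)) := by
      ext k
      simp only [Finset.mem_filter, Finset.mem_univ, true_and, Finset.mem_biUnion,
        Finset.mem_attach, Finset.mem_image, Subtype.exists]
      constructor
      · intro hk
        obtain ⟨B, hB, hkB⟩ := hγ.1.2.1 k
        obtain ⟨j, rfl⟩ := emb_surj B hkB
        refine ⟨B, hB, j, ?_, rfl⟩
        intro s hs hmin
        exact hk (blowBlock B s) (blowBlock_mem_glue hB hs) ((blowBlock_min_eq B).2 hmin)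
      · rintro ⟨B, hB, j, hj, rfl⟩
        intro C hC hmin
        obtain ⟨B', hB', s, hs, rfl⟩ := mem_glue.1 hC
        have hkC : emb B j ∈ blowBlock B' s := Finset.mem_of_min hmin
        have hB'B : B' = B := by
          by_contra hne
          exact Finset.disjoint_left.1 (hγ.2 B' hB' B hB hne)
            (blowBlock_subset B' s hkC) (emb_mem B j)
        subst hB'B
        exact hj s hs ((blowBlock_min_eq B').1 hmin)
    rw [hfil, Finset.prod_biUnion ?disj]
    case disj =>
      intro b₁ _ b₂ _ hne
      have hne' : b₁.1 ≠ b₂.1 := fun h => hne (Subtype.ext h)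
      rw [Function.onFun, Finset.disjoint_left]
      intro k hk1 hk2
      obtain ⟨j₁, _, rfl⟩ := Finset.mem_image.1 hk1
      obtain ⟨j₂, _, hj⟩ := Finset.mem_image.1 hk2
      exact Finset.disjoint_left.1 (hγ.2 b₁.1 b₁.2 b₂.1 b₂.2 hne')
        (emb_mem b₁.1 j₁) (hj ▸ emb_mem b₂.1 j₂)
    refine Finset.prod_congr rfl ?_
    intro b _
    rw [Finset.prod_image (fun j₁ _ j₂ _ h => emb_inj b.1 h)]

end Mult

section Shrink
open Finset

variable {n : ℕ} {π : Finset (Finset (Fin n))}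

lemma cls_of_mem_cPart {B : Finset (Fin n)} (hB : B ∈ cPart n π) {b : Fin n} (hb : b ∈ B) :
    cls π b = B := by
  obtain ⟨i, rfl⟩ := mem_cPart.1 hB
  exact (cls_eq_of_connected (mem_cls.1 hb)).symm

lemma connected_shrink {B : Finset (Fin n)} (hB : B ∈ cPart n π) {x y : Fin n}
    (hxy : Connected π x y) (hx : x ∈ B) :
    ∀ jx jy, emb B jx = x → emb B jy = y → Connected (shrink B π) jx jy := by
  induction hxy with
  | refl =>
    intro jx jy h1 h2
    have : jx = jy := emb_inj B (h1.trans h2.symm)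
    subst this
    exact Relation.ReflTransGen.refl
  | @tail z y hxz hzy ih =>
    intro jx jy h1 h2
    have hz : z ∈ B := (cls_of_mem_cPart hB hx) ▸ mem_cls.2 hxz
    obtain ⟨jz, hjz⟩ := emb_surj B hz
    refine Relation.ReflTransGen.tail (ih jx jz h1 hjz) ?_
    obtain ⟨C, hC, hzC, hyC⟩ := hzy
    have hCB : C ⊆ B := (cls_of_mem_cPart hB hz) ▸ block_subset_cls hC hzC
    refine ⟨shrinkBlock B C, Finset.mem_image_of_mem _ (Finset.mem_filter.2 ⟨hC, hCB⟩), ?_, ?_⟩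
    · simp only [shrinkBlock, Finset.mem_filter, Finset.mem_univ, true_and, hjz]
      exact hzC
    · simp only [shrinkBlock, Finset.mem_filter, Finset.mem_univ, true_and, h2]
      exact hyC

lemma shrink_mem_TSet (hπ : IsNCL n π) {B : Finset (Fin n)} (hB : B ∈ cPart n π) :
    shrink B π ∈ TSet B := by
  have hcls : ∀ {C : Finset (Fin n)}, C ∈ π → ∀ {c : Fin n}, c ∈ C → c ∈ B → C ⊆ B :=
    fun {C} hC {c} hc hcB => (cls_of_mem_cPart hB hcB) ▸ block_subset_cls hC hc
  refine mem_TSet.2 ⟨⟨?_, ?_, ?_, ?_⟩, ?_⟩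
  · intro s hs
    obtain ⟨C, hC, rfl⟩ := Finset.mem_image.1 hs
    rw [Finset.mem_filter] at hC
    obtain ⟨c, hc⟩ := hπ.1 C hC.1
    obtain ⟨j, hj⟩ := emb_surj B (hC.2 hc)
    exact ⟨j, by simp only [shrinkBlock, Finset.mem_filter, Finset.mem_univ, true_and, hj]; exact hc⟩
  · intro j
    obtain ⟨C, hC, hjC⟩ := hπ.2.1 (emb B j)
    have hCB : C ⊆ B := hcls hC hjC (emb_mem B j)
    exact ⟨shrinkBlock B C, Finset.mem_image_of_mem _ (Finset.mem_filter.2 ⟨hC, hCB⟩),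
      by simp only [shrinkBlock, Finset.mem_filter, Finset.mem_univ, true_and]; exact hjC⟩
  · intro s₁ hs₁ s₂ hs₂ hne hcr
    obtain ⟨C₁, hC₁, rfl⟩ := Finset.mem_image.1 hs₁
    obtain ⟨C₂, hC₂, rfl⟩ := Finset.mem_image.1 hs₂
    rw [Finset.mem_filter] at hC₁ hC₂
    have e₁ := blowBlock_shrinkBlock B hC₁.2
    have e₂ := blowBlock_shrinkBlock B hC₂.2
    have hCne : C₁ ≠ C₂ := fun h => hne (h ▸ rfl)
    apply hπ.2.2.1 C₁ hC₁.1 C₂ hC₂.1 hCne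
    rw [← e₁, ← e₂]
    exact (crosses_blowBlock B).2 hcr
  · intro s₁ hs₁ s₂ hs₂ hne
    obtain ⟨C₁, hC₁, rfl⟩ := Finset.mem_image.1 hs₁
    obtain ⟨C₂, hC₂, rfl⟩ := Finset.mem_image.1 hs₂
    rw [Finset.mem_filter] at hC₁ hC₂
    have e₁ := blowBlock_shrinkBlock B hC₁.2
    have e₂ := blowBlock_shrinkBlock B hC₂.2
    have hCne : C₁ ≠ C₂ := fun h => hne (h ▸ rfl)
    have hloc := hπ.2.2.2 C₁ hC₁.1 C₂ hC₂.1 hCne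
    constructor
    · calc (shrinkBlock B C₁ ∩ shrinkBlock B C₂).card
          = (blowBlock B (shrinkBlock B C₁ ∩ shrinkBlock B C₂)).card :=
            (blowBlock_card B _).symm
        _ = (C₁ ∩ C₂).card := by rw [blowBlock_inter, e₁, e₂]
        _ ≤ 1 := hloc.1
    · intro j hj
      have hint : C₁ ∩ C₂ = {emb B j} := by
        rw [← e₁, ← e₂, ← blowBlock_inter, hj, blowBlock_singleton]
      obtain ⟨h2, h3, h4⟩ := hloc.2 (emb B j) hint
      refine ⟨?_, ?_, ?_⟩
      · rw [← blowBlock_card B, e₁]; exact h2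
      · rw [← blowBlock_card B, e₂]; exact h3
      · rw [← e₁, ← e₂, blowBlock_min_eq, blowBlock_min_eq] at h4
        exact h4
  · have hBne : B.Nonempty := by
      obtain ⟨i, rfl⟩ := mem_cPart.1 hB
      exact ⟨i, mem_cls_self i⟩
    rw [cPart_eq_univ_iff (Finset.card_pos.2 hBne)]
    intro j j'
    have hconn : Connected π (emb B j) (emb B j') := by
      obtain ⟨i, rfl⟩ := mem_cPart.1 hB
      exact connected_trans (connected_symm (mem_cls.1 (emb_mem _ j))) (mem_cls.1 (emb_mem _ j'))
    exact connected_shrink hB hconn (emb_mem B j) j j' rfl rfl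

lemma glue_shrink (hπ : IsNCL n π) :
    glue (cPart n π) (fun B _ => shrink B π) = π := by
  ext C
  rw [mem_glue]
  constructor
  · rintro ⟨B, hB, s, hs, rfl⟩
    obtain ⟨C', hC', rfl⟩ := Finset.mem_image.1 hs
    rw [Finset.mem_filter] at hC'
    rw [blowBlock_shrinkBlock B hC'.2]
    exact hC'.1
  · intro hC
    obtain ⟨c, hc⟩ := hπ.1 C hC
    have hCB : C ⊆ cls π c := block_subset_cls hC hc
    exact ⟨cls π c, cls_mem_cPart c, shrinkBlock (cls π c) C,
      Finset.mem_image_of_mem _ (Finset.mem_filter.2 ⟨hC, hCB⟩),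
      (blowBlock_shrinkBlock _ hCB).symm⟩

end Shrink
section Main
open Finset

variable {A : Type*} [Ring A] [Algebra ℂ A]

/-- Sum of `tTerm` over connected non-crossing linked partitions. -/
noncomputable def Fconn (t : ∀ m : ℕ, (Fin m → A) → ℂ) (m : ℕ) (Y : Fin m → A) : ℂ :=
  ∑ σ ∈ Finset.univ.filter (fun σ => IsNCL m σ ∧ cPart m σ = {Finset.univ}), tTerm t m σ Y

lemma key_sum (t : ∀ m : ℕ, (Fin m → A) → ℂ) (m : ℕ) (X : Fin m → A) :
    ∑ π ∈ Finset.univ.filter (fun π => IsNCL m π), tTerm t m π X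
      = ∑ γ ∈ Finset.univ.filter (fun γ => IsNC m γ),
          ∏ B ∈ γ, Fconn t B.card (fun j => X (emb B j)) := by
  have hmap : ∀ π ∈ Finset.univ.filter (fun π => IsNCL m π),
      cPart m π ∈ Finset.univ.filter (fun γ => IsNC m γ) := by
    intro π hπ
    rw [Finset.mem_filter] at hπ ⊢
    exact ⟨Finset.mem_univ _, cPart_isNC hπ.2⟩
  rw [← Finset.sum_fiberwise_of_maps_to hmap (tTerm t m · X)]
  refine Finset.sum_congr rfl ?_
  intro γ hγf
  have hγ : IsNC m γ := (Finset.mem_filter.1 hγf).2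
  have hprod : (∏ B ∈ γ, Fconn t B.card (fun j => X (emb B j)))
      = ∑ p ∈ γ.pi TSet, ∏ b ∈ γ.attach,
          tTerm t b.1.card (p b.1 b.2) (fun j => X (emb b.1 j)) := by
    rw [← Finset.prod_sum γ TSet (fun B σ => tTerm t B.card σ (fun j => X (emb B j)))]
    exact Finset.prod_congr rfl fun B _ => rfl
  rw [hprod]
  refine (Finset.sum_bij (fun p _ => glue γ p) ?_ ?_ ?_ ?_).symm
  · intro p hp
    have hp' : ∀ (B) (hB : B ∈ γ), p B hB ∈ TSet B := Finset.mem_pi.1 hp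
    rw [Finset.mem_filter, Finset.mem_filter]
    exact ⟨⟨Finset.mem_univ _, glue_isNCL hγ hp'⟩, cPart_glue hγ hp'⟩
  · intro p₁ hp₁ p₂ hp₂ heq
    have hp₁' : ∀ (B) (hB : B ∈ γ), p₁ B hB ∈ TSet B := Finset.mem_pi.1 hp₁
    have hp₂' : ∀ (B) (hB : B ∈ γ), p₂ B hB ∈ TSet B := Finset.mem_pi.1 hp₂
    funext B hB
    apply Finset.image_injective (blowBlock_inj B)
    have h₁ := glue_filter hγ hp₁' hB
    have h₂ := glue_filter hγ hp₂' hB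
    rw [show Finset.image (blowBlock B) (p₁ B hB) = blow B (p₁ B hB) from rfl,
      show Finset.image (blowBlock B) (p₂ B hB) = blow B (p₂ B hB) from rfl,
      ← h₁, ← h₂]
    exact congrArg _ heq
  · intro π hπf
    rw [Finset.mem_filter, Finset.mem_filter] at hπf
    obtain ⟨⟨-, hπ⟩, hcp⟩ := hπf
    subst hcp
    refine ⟨fun B _ => shrink B π, ?_, glue_shrink hπ⟩
    exact Finset.mem_pi.2 fun B hB => shrink_mem_TSet hπ hB
  · intro p hp
    exact (tTerm_glue hγ (Finset.mem_pi.1 hp) t X).symm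

lemma orderEmb_univ (m : ℕ) (hcard : (Finset.univ : Finset (Fin m)).card = m)
    (j : Fin (Finset.univ : Finset (Fin m)).card) :
    (Finset.univ : Finset (Fin m)).orderEmbOfFin rfl j = Fin.cast hcard j := by
  have hmono : StrictMono (fun j : Fin (Finset.univ : Finset (Fin m)).card =>
      Fin.cast hcard j) := fun a b hab => hab
  exact (congrFun (Finset.orderEmbOfFin_unique rfl (fun x => Finset.mem_univ _) hmono) j).symm

end Main
section Final
open Finset

variable {A' : Type*} [Ring A'] [Algebra ℂ A']

lemma univ_isNC (m : ℕ) : IsNC (m + 1) {(Finset.univ : Finset (Fin (m + 1)))} := by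
  refine ⟨⟨?_, ?_, ?_, ?_⟩, ?_⟩
  · intro B hB
    rw [Finset.mem_singleton] at hB
    subst hB
    exact Finset.univ_nonempty
  · intro x
    exact ⟨Finset.univ, Finset.mem_singleton_self _, Finset.mem_univ x⟩
  · intro B hB C hC hne
    rw [Finset.mem_singleton] at hB hC
    exact absurd (hB.trans hC.symm) hne
  · intro B hB C hC hne
    rw [Finset.mem_singleton] at hB hC
    exact absurd (hB.trans hC.symm) hne
  · intro B hB C hC hne
    rw [Finset.mem_singleton] at hB hC
    exact absurd (hB.trans hC.symm) hne

lemma block_card_le {m : ℕ} {γ : Finset (Finset (Fin (m + 1)))} (hγ : IsNC (m + 1) γ)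
    (hne : γ ≠ {Finset.univ}) {B : Finset (Fin (m + 1))} (hB : B ∈ γ) : B.card ≤ m := by
  have hBu : B ≠ Finset.univ := by
    intro h
    subst h
    apply hne
    apply Finset.eq_singleton_iff_unique_mem.2
    refine ⟨hB, ?_⟩
    intro C hC
    by_contra hCne
    obtain ⟨c, hc⟩ := hγ.1.1 C hC
    exact Finset.disjoint_left.1 (hγ.2 C hC _ hB hCne) hc (Finset.mem_univ c)
  have : B ⊂ Finset.univ := Finset.ssubset_univ_iff.2 hBu
  have hlt := Finset.card_lt_card this
  simpa using Nat.lt_succ_iff.1 (by simpa using hlt)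

lemma kappa_eq_Fconn (φ : A' →ₗ[ℂ] ℂ) (t κ : ∀ m : ℕ, (Fin m → A') → ℂ)
    (ht : TRec φ t) (hκ : CumRec φ κ) :
    ∀ (k : ℕ) (X : Fin (k + 1) → A'), κ (k + 1) X = Fconn t (k + 1) X := by
  intro k
  induction k using Nat.strong_induction_on with
  | _ k IH =>
    intro X
    have hbase : ∀ m' : ℕ, 0 < m' → m' ≤ k → ∀ Y : Fin m' → A', κ m' Y = Fconn t m' Y := by
      intro m' hm' hmk Y
      cases m' with
      | zero => omega
      | succ l => exact IH l (by omega) Y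
    have hmain : ∑ γ ∈ Finset.univ.filter (fun γ => IsNC (k + 1) γ), cumTerm κ (k + 1) γ X
        = ∑ γ ∈ Finset.univ.filter (fun γ => IsNC (k + 1) γ),
            ∏ B ∈ γ, Fconn t B.card (fun j => X (emb B j)) := by
      rw [← hκ k X, ht k X, key_sum]
    have hmem : {(Finset.univ : Finset (Fin (k + 1)))}
        ∈ Finset.univ.filter (fun γ => IsNC (k + 1) γ) :=
      Finset.mem_filter.2 ⟨Finset.mem_univ _, univ_isNC k⟩
    rw [← Finset.add_sum_erase _ _ hmem, ← Finset.add_sum_erase _ _ hmem] at hmain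
    have herase : ∑ γ ∈ (Finset.univ.filter (fun γ => IsNC (k + 1) γ)).erase
          {(Finset.univ : Finset (Fin (k + 1)))}, cumTerm κ (k + 1) γ X
        = ∑ γ ∈ (Finset.univ.filter (fun γ => IsNC (k + 1) γ)).erase
          {(Finset.univ : Finset (Fin (k + 1)))},
            ∏ B ∈ γ, Fconn t B.card (fun j => X (emb B j)) := by
      refine Finset.sum_congr rfl ?_
      intro γ hγe
      obtain ⟨hne, hγf⟩ := Finset.mem_erase.1 hγe
      have hγ : IsNC (k + 1) γ := (Finset.mem_filter.1 hγf).2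
      refine Finset.prod_congr rfl ?_
      intro B hB
      have hBpos : 0 < B.card := Finset.card_pos.2 (hγ.1.1 B hB)
      exact hbase B.card hBpos (block_card_le hγ hne hB) _
    rw [herase] at hmain
    have hcancel := add_right_cancel hmain
    have hcard : (Finset.univ : Finset (Fin (k + 1))).card = k + 1 := by simp
    have h1 : cumTerm κ (k + 1) {(Finset.univ : Finset (Fin (k + 1)))} X = κ (k + 1) X := by
      unfold cumTerm
      rw [Finset.prod_singleton]
      refine depCongr κ hcard ?_
      intro j
      show X ((Finset.univ : Finset (Fin (k + 1))).orderEmbOfFin rfl j) = _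
      rw [orderEmb_univ (k + 1) hcard j]
    have h2 : (∏ B ∈ ({(Finset.univ : Finset (Fin (k + 1)))} : Finset _),
          Fconn t B.card (fun j => X (emb B j))) = Fconn t (k + 1) X := by
      rw [Finset.prod_singleton]
      refine depCongr (Fconn t) hcard ?_
      intro j
      show X ((Finset.univ : Finset (Fin (k + 1))).orderEmbOfFin rfl j) = _
      rw [orderEmb_univ (k + 1) hcard j]
    rw [← h1, ← h2]
    exact hcancel

end Final

/-- For all `n ≥ 1`, the free cumulant satisfies
`κ_n(X_1, …, X_n) = Σ_{π ∈ [1_n]} t_π[X_1, …, X_n]`, the sum over all connected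
non-crossing linked partitions of `{1, …, n}`. -/
theorem cumulant_eq_sum_connected_tTerm (A : Type*) [Ring A] [Algebra ℂ A]
    (φ : A →ₗ[ℂ] ℂ) (hφ1 : φ 1 = 1)
    (t κ : ∀ m : ℕ, (Fin m → A) → ℂ) (ht : TRec φ t) (hκ : CumRec φ κ) :
    ∀ (n : ℕ) (X : Fin (n + 1) → A), (∀ i, i ≠ 0 → φ (X i) ≠ 0) →
      κ (n + 1) X =
        ∑ π ∈ Finset.univ.filter (fun π => IsNCL (n + 1) π ∧
            cPart (n + 1) π = {(Finset.univ : Finset (Fin (n + 1)))}),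
          tTerm t (n + 1) π X := by
  intro n X _
  exact kappa_eq_Fconn φ t κ ht hκ n X
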